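/- Let F be the free group on two generators, p a prime, n ≥ 3, and G = F/λ_n(F). Then G has exactly p+1 maximal subgroups, and the power subgroups M^(p^(n-2)), as M ranges over the maximal subgroups of G, are pairwise distinct subgroups of order p contained in λ_{n-1}(F)/λ_n(F). Moreover every element of M outside the Frattini subgroup Φ(G) has order p^(n-1). -/

import Mathlib

/-- The subgroup generated by `m`-th powers of elements of `H`. -/
def pPow {G : Type*} [Group G] (H : Subgroup G) (m : ℕ) : Subgroup G :=
  Subgroup.closure {x : G | ∃ h ∈ H, x = h ^ m}

/-- The `p`-central series: `lam p 1 = ⊤` and `lam p (n+1) = [lam p n, G] ⊔ (lam p n)^p`.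
    (We also set `lam p 0 = ⊤`.) -/
def lam {G : Type*} [Group G] (p : ℕ) : ℕ → Subgroup G
  | 0 => ⊤
  | 1 => ⊤
  | (n+2) => ⁅(lam p (n+1) : Subgroup G), (⊤ : Subgroup G)⁆ ⊔ pPow (lam p (n+1)) p

theorem pPow_normal {G : Type*} [Group G] (H : Subgroup G) [hH : H.Normal] (m : ℕ) :
    (pPow H m).Normal := by
  have key : ∀ x ∈ pPow H m, ∀ g : G, g * x * g⁻¹ ∈ pPow H m := by
    intro x hx
    induction hx using Subgroup.closure_induction with
    | mem y hy =>
        intro g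
        obtain ⟨h, hh, rfl⟩ := hy
        refine Subgroup.subset_closure ⟨g * h * g⁻¹, hH.conj_mem h hh g, ?_⟩
        exact conj_pow.symm
    | one => intro g; simpa using (pPow H m).one_mem
    | mul x y hx hy ihx ihy =>
        intro g
        have h2 := mul_mem (ihx g) (ihy g)
        have : g * x * g⁻¹ * (g * y * g⁻¹) = g * (x * y) * g⁻¹ := by group
        rwa [this] at h2
    | inv x hx ihx =>
        intro g
        have h2 := inv_mem (ihx g)
        have : (g * x * g⁻¹)⁻¹ = g * x⁻¹ * g⁻¹ := by group
        rwa [this] at h2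
  exact ⟨fun x hx g => key x hx g⟩

theorem lam_normal' {G : Type*} [Group G] (p : ℕ) : ∀ n, (lam (G := G) p n).Normal
  | 0 => inferInstanceAs (⊤ : Subgroup G).Normal
  | 1 => inferInstanceAs (⊤ : Subgroup G).Normal
  | (n+2) => by
      haveI := lam_normal' (G := G) p (n+1)
      haveI := pPow_normal (lam (G := G) p (n+1)) p
      show (⁅(lam p (n+1) : Subgroup G), (⊤ : Subgroup G)⁆ ⊔ pPow (lam p (n+1)) p).Normal
      infer_instance

instance lam_normal {G : Type*} [Group G] (p n : ℕ) : (lam (G := G) p n).Normal :=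
  lam_normal' p n

/-- The union of all conjugates of the cyclic subgroup generated by `x`. -/
def conjClosure {G : Type*} [Group G] (x : G) : Set G :=
  ⋃ g : G, (fun h => g⁻¹ * h * g) '' (Subgroup.zpowers x : Set G)

/-- `Σ(x,y)`: the union of all conjugates of `⟨x⟩`, `⟨y⟩` and `⟨xy⟩`. -/
def SigmaSet {G : Type*} [Group G] (x y : G) : Set G :=
  conjClosure x ∪ conjClosure y ∪ conjClosure (x * y)

/-- `{x₁,y₁}` and `{x₂,y₂}` form a Beauville structure for `G`. -/
def IsBeauvilleStructure {G : Type*} [Group G] (x₁ y₁ x₂ y₂ : G) : Prop :=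
  Subgroup.closure {x₁, y₁} = ⊤ ∧ Subgroup.closure {x₂, y₂} = ⊤ ∧
    SigmaSet x₁ y₁ ∩ SigmaSet x₂ y₂ = {1}

/-- A Beauville group: a finite nontrivial (2-generated) group admitting a Beauville
structure. -/
def IsBeauvilleGroup (G : Type*) [Group G] : Prop :=
  Finite G ∧ Nontrivial G ∧ ∃ x₁ y₁ x₂ y₂ : G, IsBeauvilleStructure x₁ y₁ x₂ y₂

open Subgroup
open scoped commutatorElement

section General
variable {G : Type*} [Group G] {H : Type*} [Group H] (p : ℕ)

theorem pPow_le_self (K : Subgroup G) (m : ℕ) : pPow K m ≤ K := by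
  refine (Subgroup.closure_le K).2 ?_
  rintro x ⟨h, hh, rfl⟩
  exact pow_mem hh m

theorem mem_pPow_of_mem {K : Subgroup G} {h : G} (hh : h ∈ K) (m : ℕ) : h ^ m ∈ pPow K m :=
  Subgroup.subset_closure ⟨h, hh, rfl⟩

theorem pPow_mono {K L : Subgroup G} (h : K ≤ L) (m : ℕ) : pPow K m ≤ pPow L m := by
  apply Subgroup.closure_mono
  rintro x ⟨y, hy, rfl⟩
  exact ⟨y, h hy, rfl⟩

theorem pPow_map (f : G →* H) (K : Subgroup G) (m : ℕ) :
    Subgroup.map f (pPow K m) = pPow (Subgroup.map f K) m := by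
  unfold pPow
  rw [MonoidHom.map_closure]
  congr 1
  ext x
  constructor
  · rintro ⟨y, ⟨h, hh, rfl⟩, rfl⟩
    exact ⟨f h, ⟨h, hh, rfl⟩, map_pow f h m⟩
  · rintro ⟨h', ⟨h, hh, rfl⟩, rfl⟩
    exact ⟨h ^ m, ⟨h, hh, rfl⟩, map_pow f h m⟩

theorem commutator_lam_top_le : ∀ k, ⁅(lam (G := G) p k : Subgroup G), (⊤ : Subgroup G)⁆ ≤ lam p (k+1)
  | 0 => le_top
  | (k+1) => le_sup_left

theorem pPow_lam_le : ∀ k, pPow (lam (G := G) p k) p ≤ lam p (k+1)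
  | 0 => le_top
  | (k+1) => le_sup_right

theorem lam_succ_le : ∀ k, lam (G := G) p (k+1) ≤ lam p k
  | 0 => le_top
  | (k+1) => by
      show ⁅(lam p (k+1) : Subgroup G), (⊤ : Subgroup G)⁆ ⊔ pPow (lam p (k+1)) p ≤ lam p (k+1)
      exact sup_le (Subgroup.commutator_le_left _ _) (pPow_le_self _ _)

theorem lam_le_of_le {j k : ℕ} (h : j ≤ k) : lam (G := G) p k ≤ lam p j := by
  induction k with
  | zero => simpa using (Nat.le_zero.mp h) ▸ le_rfl
  | succ k ih =>
      rcases Nat.lt_or_ge j (k+1) with h' | h'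
      · exact le_trans (lam_succ_le p k) (ih (Nat.lt_succ_iff.mp h'))
      · have : j = k+1 := le_antisymm h h'
        subst this; exact le_rfl

theorem lam_map_le (f : G →* H) : ∀ k, Subgroup.map f (lam p k) ≤ lam p k
  | 0 => le_top
  | 1 => le_top
  | (k+2) => by
      show Subgroup.map f (⁅(lam p (k+1) : Subgroup G), (⊤ : Subgroup G)⁆ ⊔ pPow (lam p (k+1)) p) ≤ lam p (k+2)
      rw [Subgroup.map_sup, Subgroup.map_commutator, pPow_map]
      apply sup_le
      · exact le_trans (Subgroup.commutator_mono (lam_map_le f (k+1)) le_top)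
          (commutator_lam_top_le p (k+1))
      · exact le_trans (pPow_mono (lam_map_le f (k+1)) p) (pPow_lam_le p (k+1))

theorem lam_map_surj {f : G →* H} (hf : Function.Surjective f) :
    ∀ k, Subgroup.map f (lam p k) = lam p k
  | 0 => Subgroup.map_top_of_surjective f hf
  | 1 => Subgroup.map_top_of_surjective f hf
  | (k+2) => by
      show Subgroup.map f (⁅(lam p (k+1) : Subgroup G), (⊤ : Subgroup G)⁆ ⊔ pPow (lam p (k+1)) p) = _
      rw [Subgroup.map_sup, Subgroup.map_commutator, pPow_map, lam_map_surj hf (k+1),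
        Subgroup.map_top_of_surjective f hf]
      rfl

theorem lam_pow_base (m : ℕ) (g v : G) (hv : v ∈ lam p m) :
    ∃ w ∈ lam (G := G) p (m+1), (g*v)^p = g^p * w := by
  set N := lam (G := G) p (m+1) with hN
  have key : ((g*v : G) : G ⧸ N) = ((v*g : G) : G ⧸ N) := by
    rw [QuotientGroup.eq]
    have : (g*v)⁻¹ * (v*g) = ⁅v⁻¹, g⁻¹⁆ := by group
    rw [this]
    exact commutator_lam_top_le p m (Subgroup.commutator_mem_commutator (inv_mem hv) (mem_top _))
  have hvp : ((v : G ⧸ N))^p = 1 := by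
    have : ((v : G ⧸ N))^p = ((v^p : G) : G ⧸ N) := by
      simp
    rw [this, QuotientGroup.eq_one_iff]
    exact pPow_lam_le p m (mem_pPow_of_mem hv p)
  have hcomm : Commute ((g : G ⧸ N)) ((v : G ⧸ N)) := by
    show _ = _
    rw [← QuotientGroup.mk_mul, ← QuotientGroup.mk_mul, key]
  have main : ((g^p : G) : G ⧸ N) = (((g*v)^p : G) : G ⧸ N) := by
    have h1 : (((g*v)^p : G) : G ⧸ N) = ((g : G ⧸ N) * (v : G ⧸ N))^p := by simp
    rw [h1, hcomm.mul_pow, hvp, mul_one]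
    simp
  refine ⟨(g^p)⁻¹ * (g*v)^p, ?_, by group⟩
  exact QuotientGroup.eq.mp main

theorem lam_pow_iter (k j : ℕ) (g v : G) (hv : v ∈ lam p j) :
    ∃ w ∈ lam (G := G) p (j+k), (g*v)^(p^k) = g^(p^k) * w := by
  induction k with
  | zero => exact ⟨v, hv, by simp⟩
  | succ k ih =>
      obtain ⟨w, hw, hgw⟩ := ih
      obtain ⟨w', hw', hgw'⟩ := lam_pow_base p (j+k) (g^(p^k)) w hw
      refine ⟨w', hw', ?_⟩
      rw [pow_succ, pow_mul, hgw, hgw', ← pow_mul, ← pow_succ]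

theorem pow_p_pow_mem (g : G) (k : ℕ) : g^(p^k) ∈ lam (G := G) p (k+1) := by
  obtain ⟨w, hw, h⟩ := lam_pow_iter p k 1 1 g (mem_top g)
  rw [one_mul, one_pow, one_mul] at h
  rw [h]
  rwa [Nat.add_comm] at hw

theorem lcs_le_lam : ∀ k, Subgroup.lowerCentralSeries (⊤ : Subgroup G) k ≤ lam p (k+1)
  | 0 => le_top
  | (k+1) => by
      rw [Subgroup.lowerCentralSeries_succ]
      exact le_trans (Subgroup.commutator_mono (lcs_le_lam k) le_rfl)
        (commutator_lam_top_le p (k+1))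

theorem isNilpotent_of_lam_bot {n : ℕ} (hn : 1 ≤ n) (h : lam (G := G) p n = ⊥) :
    Group.IsNilpotent G := by
  rw [Subgroup.nilpotent_iff_lowerCentralSeries]
  refine ⟨n-1, le_bot_iff.mp ?_⟩
  have := lcs_le_lam (G := G) p (n-1)
  rwa [Nat.sub_add_cancel hn, h] at this

end General

section Comm
variable {A : Type*} [CommGroup A] (p : ℕ)

theorem lam_le_powRange : ∀ k, lam (G := A) p (k+1) ≤ (powMonoidHom (p^k) : A →* A).range
  | 0 => fun x _ => ⟨x, by simp [powMonoidHom_apply]⟩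
  | (k+1) => by
      show ⁅(lam p (k+1) : Subgroup A), (⊤ : Subgroup A)⁆ ⊔ pPow (lam p (k+1)) p ≤ _
      apply sup_le
      · rw [Subgroup.commutator_le]
        intro a _ b _
        rw [commutatorElement_eq_one_iff_commute.2 (mul_comm a b)]
        exact one_mem _
      · refine (Subgroup.closure_le _).2 ?_
        rintro x ⟨h, hh, rfl⟩
        obtain ⟨y, hy⟩ := lam_le_powRange k hh
        refine ⟨y, ?_⟩
        simp only [powMonoidHom_apply] at hy ⊢
        rw [← hy, ← pow_mul, ← pow_succ]

theorem lam_eq_bot_of_exponent {m : ℕ} (hexp : ∀ x : A, x ^ (p^m) = 1) :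
    ∀ x ∈ lam (G := A) p (m+1), x = 1 := by
  intro x hx
  obtain ⟨y, hy⟩ := lam_le_powRange p m hx
  rw [← hy, powMonoidHom_apply, hexp]

end Comm

section Lines
variable (p : ℕ) [Fact p.Prime]

abbrev Xp (p : ℕ) := ZMod p × ZMod p

def line (c : ZMod p) : AddSubgroup (Xp p) := AddSubgroup.zmultiples ((1, c) : Xp p)

def lineInf : AddSubgroup (Xp p) := AddSubgroup.zmultiples ((0, 1) : Xp p)

theorem zsmul_eq (k : ℤ) (v : Xp p) : k • v = ((k : ZMod p) * v.1, (k : ZMod p) * v.2) := by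
  ext <;> simp [zsmul_eq_mul]

theorem sm_mem {K : AddSubgroup (Xp p)} {v : Xp p} (hv : v ∈ K) (s : ZMod p) :
    (s * v.1, s * v.2) ∈ K := by
  have : ((s.val : ℤ) • v) ∈ K := zsmul_mem hv (s.val : ℤ)
  rwa [zsmul_eq, Int.cast_natCast, ZMod.natCast_val, ZMod.cast_id] at this

theorem mem_line {c : ZMod p} {v : Xp p} : v ∈ line p c ↔ v.2 = v.1 * c := by
  constructor
  · rintro ⟨k, rfl⟩
    simp [zsmul_eq, mul_assoc]
  · intro h
    refine ⟨(v.1.val : ℤ), ?_⟩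
    show (v.1.val : ℤ) • ((1 : ZMod p), c) = v
    rw [zsmul_eq]
    simp only [Int.cast_natCast, ZMod.natCast_val, ZMod.cast_id]
    ext
    · simp
    · simp [h.symm]

theorem mem_lineInf {v : Xp p} : v ∈ lineInf p ↔ v.1 = 0 := by
  constructor
  · rintro ⟨k, rfl⟩
    simp [zsmul_eq]
  · intro h
    refine ⟨(v.2.val : ℤ), ?_⟩
    show (v.2.val : ℤ) • ((0 : ZMod p), (1 : ZMod p)) = v
    rw [zsmul_eq]
    simp only [Int.cast_natCast, ZMod.natCast_val, ZMod.cast_id]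
    ext
    · simp [h]
    · simp

theorem gen_mem_top {K : AddSubgroup (Xp p)} {c : ZMod p} (h1 : (1, c) ∈ K) (h0 : ((0:ZMod p), (1:ZMod p)) ∈ K) :
    K = ⊤ := by
  rw [eq_top_iff]
  intro w _
  have hw1 : (w.1 * 1, w.1 * c) ∈ K := sm_mem p h1 w.1
  have hw2 : ((w.2 - w.1 * c) * 0, (w.2 - w.1 * c) * 1) ∈ K := sm_mem p h0 _
  have := AddSubgroup.add_mem K hw1 hw2
  simpa using this

theorem line_ne_top (c : ZMod p) : line p c ≠ ⊤ := by
  intro h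
  have : ((0 : ZMod p), (1 : ZMod p)) ∈ line p c := h ▸ AddSubgroup.mem_top _
  rw [mem_line] at this
  simp at this

theorem lineInf_ne_top : lineInf p ≠ ⊤ := by
  intro h
  have : ((1 : ZMod p), (0 : ZMod p)) ∈ lineInf p := h ▸ AddSubgroup.mem_top _
  rw [mem_lineInf] at this
  exact one_ne_zero this

theorem isCoatom_line (c : ZMod p) : IsCoatom (line p c) := by
  refine ⟨line_ne_top p c, fun K hK => ?_⟩
  obtain ⟨v, hvK, hvL⟩ := SetLike.exists_of_lt hK
  rw [mem_line] at hvL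
  have h1 : (1, c) ∈ K := hK.le ((mem_line p).mpr (by simp))
  set d := v.2 - v.1 * c with hd
  have hd0 : d ≠ 0 := sub_ne_zero.mpr hvL
  have hv1K : (v.1 * 1, v.1 * c) ∈ K := sm_mem p h1 v.1
  have hdK : ((0 : ZMod p), d) ∈ K := by
    have := AddSubgroup.sub_mem K hvK hv1K
    have he : (v.1 - v.1 * 1, v.2 - v.1 * c) = ((0 : ZMod p), d) := by
      ext <;> simp [hd]
    have h2 : v - (v.1 * 1, v.1 * c) = ((0:ZMod p), d) := by
      rw [Prod.sub_def] at *
      simpa using he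
    rwa [h2] at this
  have h0 : ((0:ZMod p), (1:ZMod p)) ∈ K := by
    have := sm_mem p hdK d⁻¹
    simpa [inv_mul_cancel₀ hd0] using this
  exact gen_mem_top p h1 h0

theorem isCoatom_lineInf : IsCoatom (lineInf p) := by
  refine ⟨lineInf_ne_top p, fun K hK => ?_⟩
  obtain ⟨v, hvK, hvL⟩ := SetLike.exists_of_lt hK
  rw [mem_lineInf] at hvL
  have h0 : ((0:ZMod p), (1:ZMod p)) ∈ K := hK.le ((mem_lineInf p).mpr rfl)
  have h1 : ((1:ZMod p), v.1⁻¹ * v.2) ∈ K := by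
    have := sm_mem p hvK v.1⁻¹
    rwa [inv_mul_cancel₀ hvL] at this
  exact gen_mem_top p h1 h0

theorem coatom_classification {K : AddSubgroup (Xp p)} (hK : IsCoatom K) :
    (∃ c, K = line p c) ∨ K = lineInf p := by
  by_cases hx : ∃ v ∈ K, v.1 ≠ 0
  · obtain ⟨v, hvK, hv1⟩ := hx
    set c := v.1⁻¹ * v.2 with hc
    have h1 : (1, c) ∈ K := by
      have := sm_mem p hvK v.1⁻¹
      rwa [inv_mul_cancel₀ hv1] at this
    have hle : line p c ≤ K := by
      rintro w ⟨k, rfl⟩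
      exact zsmul_mem h1 k
    left
    refine ⟨c, ?_⟩
    rcases hle.lt_or_eq with h | h
    · exact absurd ((isCoatom_line p c).2 K h) hK.1
    · exact h.symm
  · push_neg at hx
    have hle : K ≤ lineInf p := fun v hv => (mem_lineInf p).mpr (hx v hv)
    rcases hle.lt_or_eq with h | h
    · exact absurd (hK.2 _ h) (lineInf_ne_top p)
    · exact Or.inr h

theorem line_injective {c c' : ZMod p} (h : line p c = line p c') : c = c' := by
  have : ((1 : ZMod p), c) ∈ line p c' := h ▸ (mem_line p).mpr (by simp)
  rw [mem_line] at this
  simpa using this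

theorem line_ne_lineInf (c : ZMod p) : line p c ≠ lineInf p := by
  intro h
  have : ((1 : ZMod p), c) ∈ lineInf p := h ▸ (mem_line p).mpr (by simp)
  rw [mem_lineInf] at this
  exact one_ne_zero this

theorem coatom_eq_zmultiples {K : AddSubgroup (Xp p)} (hK : IsCoatom K) {v : Xp p}
    (hvK : v ∈ K) (hv : v ≠ 0) : K = AddSubgroup.zmultiples v := by
  have hle : AddSubgroup.zmultiples v ≤ K := by
    rintro w ⟨k, rfl⟩; exact zsmul_mem hvK k
  refine le_antisymm ?_ hle
  rcases coatom_classification p hK with ⟨c, rfl⟩ | rfl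
  · have hv2 : v.2 = v.1 * c := (mem_line p).mp hvK
    have hv1 : v.1 ≠ 0 := by
      intro h
      exact hv (Prod.ext_iff.mpr ⟨h, by rw [hv2, h, zero_mul]; rfl⟩)
    intro w hw
    have hw2 : w.2 = w.1 * c := (mem_line p).mp hw
    have : ((w.1 * v.1⁻¹) * v.1, (w.1 * v.1⁻¹) * v.2) ∈ AddSubgroup.zmultiples v :=
      sm_mem p (AddSubgroup.mem_zmultiples v) _
    have he : ((w.1 * v.1⁻¹) * v.1, (w.1 * v.1⁻¹) * v.2) = w := by
      ext
      · simp [mul_assoc, inv_mul_cancel₀ hv1]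
      · rw [hv2, hw2]
        field_simp
    rwa [he] at this
  · have hv1 : v.1 = 0 := (mem_lineInf p).mp hvK
    have hv2 : v.2 ≠ 0 := by
      intro h; apply hv; ext <;> simp [hv1, h]
    intro w hw
    have hw1 : w.1 = 0 := (mem_lineInf p).mp hw
    have : ((w.2 * v.2⁻¹) * v.1, (w.2 * v.2⁻¹) * v.2) ∈ AddSubgroup.zmultiples v :=
      sm_mem p (AddSubgroup.mem_zmultiples v) _
    have he : ((w.2 * v.2⁻¹) * v.1, (w.2 * v.2⁻¹) * v.2) = w := by
      ext
      · simp [hv1, hw1]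
      · simp [mul_assoc, inv_mul_cancel₀ hv2]
    rwa [he] at this

theorem coatom_exists_ne_zero {K : AddSubgroup (Xp p)} (hK : IsCoatom K) :
    ∃ v ∈ K, v ≠ 0 := by
  rcases coatom_classification p hK with ⟨c, rfl⟩ | rfl
  · refine ⟨(1, c), (mem_line p).mpr (by simp), by simp [Prod.ext_iff]⟩
  · refine ⟨(0, 1), (mem_lineInf p).mpr rfl, by simp [Prod.ext_iff]⟩

noncomputable def coatomEquiv : Option (ZMod p) ≃ {K : AddSubgroup (Xp p) // IsCoatom K} := by
  apply Equiv.ofBijective (fun o => o.elim ⟨lineInf p, isCoatom_lineInf p⟩ (fun c => ⟨line p c, isCoatom_line p c⟩))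
  constructor
  · intro o o' h
    simp only [Subtype.mk.injEq] at *
    match o, o' with
    | none, none => rfl
    | none, some c => exact absurd (congrArg Subtype.val h).symm (line_ne_lineInf p c)
    | some c, none => exact absurd (congrArg Subtype.val h) (line_ne_lineInf p c)
    | some c, some c' => exact congrArg some (line_injective p (congrArg Subtype.val h))
  · rintro ⟨K, hK⟩
    rcases coatom_classification p hK with ⟨c, rfl⟩ | rfl
    · exact ⟨some c, rfl⟩
    · exact ⟨none, rfl⟩

theorem card_coatoms : Nat.card {K : AddSubgroup (Xp p) // IsCoatom K} = p + 1 := by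
  rw [← Nat.card_congr (coatomEquiv p), Finite.card_option, Nat.card_zmod]

end Lines

section MainDefs
variable (p n : ℕ)

abbrev Fr := FreeGroup (Fin 2)
abbrev Aq (p n : ℕ) := Multiplicative (ZMod (p^(n-1)) × ZMod (p^(n-1)))
abbrev Bp (p : ℕ) := Multiplicative (ZMod p × ZMod p)

def phi : Fr →* Aq p n :=
  FreeGroup.lift (fun i => Multiplicative.ofAdd (if i = 0 then ((1, 0) : ZMod (p^(n-1)) × ZMod (p^(n-1))) else (0, 1)))

def rmap (hn : 3 ≤ n) : Aq p n →* Bp p :=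
  AddMonoidHom.toMultiplicative
    (((ZMod.castHom (dvd_pow_self p (show n-1 ≠ 0 by omega)) (ZMod p)).toAddMonoidHom).prodMap
     ((ZMod.castHom (dvd_pow_self p (show n-1 ≠ 0 by omega)) (ZMod p)).toAddMonoidHom))

def psi (hn : 3 ≤ n) : Fr →* Bp p := (rmap p n hn).comp (phi p n)

theorem toAdd_rmap (hn : 3 ≤ n) (x : Aq p n) :
    Multiplicative.toAdd (rmap p n hn x) =
      (ZMod.castHom (dvd_pow_self p (show n-1 ≠ 0 by omega)) (ZMod p) (Multiplicative.toAdd x).1,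
       ZMod.castHom (dvd_pow_self p (show n-1 ≠ 0 by omega)) (ZMod p) (Multiplicative.toAdd x).2) := rfl

theorem phi_a : phi p n (FreeGroup.of 0) = Multiplicative.ofAdd ((1, 0) : ZMod (p^(n-1)) × ZMod (p^(n-1))) := by
  rw [phi, FreeGroup.lift_apply_of]; simp

theorem phi_b : phi p n (FreeGroup.of 1) = Multiplicative.ofAdd ((0, 1) : ZMod (p^(n-1)) × ZMod (p^(n-1))) := by
  rw [phi, FreeGroup.lift_apply_of]; simp

end MainDefs

section MainLemmas
variable (p n : ℕ) [hp : Fact p.Prime]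

theorem expA : ∀ x : Aq p n, x ^ (p^(n-1)) = 1 := by
  intro x
  rw [← toAdd_eq_zero, toAdd_pow]
  ext
  · show (p^(n-1)) • (Multiplicative.toAdd x).1 = 0
    rw [nsmul_eq_mul, ZMod.natCast_self, zero_mul]
  · show (p^(n-1)) • (Multiplicative.toAdd x).2 = 0
    rw [nsmul_eq_mul, ZMod.natCast_self, zero_mul]

theorem expB : ∀ x : Bp p, x ^ p = 1 := by
  intro x
  rw [← toAdd_eq_zero, toAdd_pow]
  ext
  · show p • (Multiplicative.toAdd x).1 = 0
    rw [nsmul_eq_mul, ZMod.natCast_self, zero_mul]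
  · show p • (Multiplicative.toAdd x).2 = 0
    rw [nsmul_eq_mul, ZMod.natCast_self, zero_mul]

theorem lamA_eq_one (hn : 3 ≤ n) : ∀ x ∈ lam (G := Aq p n) p n, x = 1 := by
  have h1 : n - 1 + 1 = n := by omega
  intro x hx
  refine lam_eq_bot_of_exponent p (m := n-1) (expA p n) x ?_
  rwa [h1]

theorem lamB_eq_one : ∀ x ∈ lam (G := Bp p) p 2, x = 1 := by
  intro x hx
  refine lam_eq_bot_of_exponent p (m := 1) (fun y => by rw [pow_one]; exact expB p y) x hx

theorem phi_lam (hn : 3 ≤ n) (x : Fr) (hx : x ∈ lam p n) : phi p n x = 1 :=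
  lamA_eq_one p n hn _ (lam_map_le p (phi p n) n ⟨x, hx, rfl⟩)

theorem psi_lam2 (hn : 3 ≤ n) (x : Fr) (hx : x ∈ lam p 2) : psi p n hn x = 1 :=
  lamB_eq_one p _ (lam_map_le p (psi p n hn) 2 ⟨x, hx, rfl⟩)


theorem pcast (hn : 3 ≤ n) (u : ZMod (p^(n-1))) (h : (p^(n-2)) • u = 0) :
    ZMod.castHom (dvd_pow_self p (show n-1 ≠ 0 by omega)) (ZMod p) u = 0 := by
  haveI : NeZero (p^(n-1)) := ⟨pow_ne_zero _ hp.out.ne_zero⟩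
  have hu : ((u.val : ℕ) : ZMod (p^(n-1))) = u := ZMod.natCast_rightInverse u
  have h' : ((p^(n-2) * u.val : ℕ) : ZMod (p^(n-1))) = 0 := by
    rw [Nat.cast_mul, hu, ← nsmul_eq_mul]
    exact_mod_cast h
  rw [ZMod.natCast_eq_zero_iff] at h'
  have hq : p^(n-1) = p^(n-2) * p := by
    rw [← pow_succ]
    congr 1
    omega
  have h2 : p^(n-2) * p ∣ p^(n-2) * u.val := by
    rw [← hq]; exact h'
  have hdvd : p ∣ u.val :=
    (Nat.mul_dvd_mul_iff_left (Nat.pos_of_ne_zero (pow_ne_zero _ hp.out.ne_zero))).mp h2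
  have : ZMod.castHom (dvd_pow_self p (show n-1 ≠ 0 by omega)) (ZMod p) u = ((u.val : ℕ) : ZMod p) := by
    rw [ZMod.castHom_apply, ← ZMod.natCast_val]
  rw [this, ZMod.natCast_eq_zero_iff]
  exact hdvd

theorem V_comm : ∀ u w : Fr ⧸ (lam p 2 : Subgroup Fr), u * w = w * u := by
  intro u w
  obtain ⟨x, rfl⟩ := QuotientGroup.mk_surjective u
  obtain ⟨y, rfl⟩ := QuotientGroup.mk_surjective w
  show ((x * y : Fr) : Fr ⧸ (lam p 2 : Subgroup Fr)) = ((y * x : Fr) : _)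
  rw [QuotientGroup.eq]
  have : (x*y)⁻¹ * (y*x) = ⁅y⁻¹, x⁻¹⁆ := by group
  rw [this]
  exact commutator_lam_top_le p 1 (Subgroup.commutator_mem_commutator (mem_top _) (mem_top _))

theorem V_gen : Subgroup.closure ({FreeGroup.of 0, FreeGroup.of 1} : Set Fr) = ⊤ := by
  have h := FreeGroup.closure_range_of (Fin 2)
  have : Set.range (FreeGroup.of : Fin 2 → Fr) = {FreeGroup.of 0, FreeGroup.of 1} := by
    ext x
    constructor
    · rintro ⟨i, rfl⟩
      fin_cases i
      · exact Or.inl rfl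
      · exact Or.inr rfl
    · rintro (rfl | rfl)
      · exact ⟨0, rfl⟩
      · exact ⟨1, rfl⟩
  rwa [this] at h

theorem V_form (v : Fr ⧸ (lam p 2 : Subgroup Fr)) :
    ∃ i j : ℤ, v = ((FreeGroup.of 0 : Fr) : Fr ⧸ (lam p 2 : Subgroup Fr))^i *
      ((FreeGroup.of 1 : Fr) : Fr ⧸ (lam p 2 : Subgroup Fr))^j := by
  obtain ⟨z, rfl⟩ := QuotientGroup.mk_surjective v
  have hz : z ∈ Subgroup.closure ({FreeGroup.of 0, FreeGroup.of 1} : Set Fr) := by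
    rw [V_gen]; exact mem_top z
  induction hz using Subgroup.closure_induction with
  | mem x hx =>
      rcases hx with rfl | rfl
      · exact ⟨1, 0, by simp⟩
      · exact ⟨0, 1, by simp⟩
  | one => exact ⟨0, 0, by simp⟩
  | mul x y hx hy ihx ihy =>
      obtain ⟨i, j, hij⟩ := ihx
      obtain ⟨i', j', hij'⟩ := ihy
      refine ⟨i + i', j + j', ?_⟩
      have hmk : ((x * y : Fr) : Fr ⧸ (lam p 2 : Subgroup Fr)) = ((x:Fr):Fr ⧸ (lam p 2 : Subgroup Fr)) * ((y:Fr):Fr ⧸ (lam p 2 : Subgroup Fr)) := rfl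
      rw [hmk, hij, hij', zpow_add, zpow_add]
      set A := ((FreeGroup.of 0 : Fr) : Fr ⧸ (lam p 2 : Subgroup Fr))
      set B := ((FreeGroup.of 1 : Fr) : Fr ⧸ (lam p 2 : Subgroup Fr))
      have c1 : B^j * A^i' = A^i' * B^j := V_comm p _ _
      calc A^i * B^j * (A^i' * B^j') = A^i * (B^j * A^i') * B^j' := by group
        _ = A^i * (A^i' * B^j) * B^j' := by rw [c1]
        _ = A^i * A^i' * (B^j * B^j') := by group
  | inv x hx ihx =>
      obtain ⟨i, j, hij⟩ := ihx
      refine ⟨-i, -j, ?_⟩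
      have hmk : ((x⁻¹ : Fr) : Fr ⧸ (lam p 2 : Subgroup Fr)) = (((x:Fr): Fr ⧸ (lam p 2 : Subgroup Fr)))⁻¹ := rfl
      rw [hmk, hij, mul_inv_rev, zpow_neg, zpow_neg]
      exact V_comm p _ _

theorem psi_a (hn : 3 ≤ n) : psi p n hn (FreeGroup.of 0) = Multiplicative.ofAdd ((1,0) : ZMod p × ZMod p) := by
  show rmap p n hn (phi p n (FreeGroup.of 0)) = _
  rw [phi_a]
  apply Multiplicative.toAdd.injective
  rw [toAdd_rmap]
  show ((ZMod.castHom _ (ZMod p)) (1:ZMod (p^(n-1))), (ZMod.castHom _ (ZMod p)) (0:ZMod (p^(n-1)))) = ((1:ZMod p),(0:ZMod p))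
  rw [map_one, map_zero]

theorem psi_b (hn : 3 ≤ n) : psi p n hn (FreeGroup.of 1) = Multiplicative.ofAdd ((0,1) : ZMod p × ZMod p) := by
  show rmap p n hn (phi p n (FreeGroup.of 1)) = _
  rw [phi_b]
  apply Multiplicative.toAdd.injective
  rw [toAdd_rmap]
  show ((ZMod.castHom _ (ZMod p)) (0:ZMod (p^(n-1))), (ZMod.castHom _ (ZMod p)) (1:ZMod (p^(n-1)))) = ((0:ZMod p),(1:ZMod p))
  rw [map_zero, map_one]

theorem psi_pow_ab (hn : 3 ≤ n) (i j : ℤ) :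
    psi p n hn ((FreeGroup.of 0)^i * (FreeGroup.of 1)^j) =
      Multiplicative.ofAdd (((i : ZMod p), (j : ZMod p)) : ZMod p × ZMod p) := by
  rw [map_mul, map_zpow, map_zpow, psi_a p n hn, psi_b p n hn]
  apply Multiplicative.toAdd.injective
  rw [toAdd_mul, toAdd_zpow, toAdd_zpow]
  ext
  · show (i • ((1:ZMod p),(0:ZMod p)) + j • ((0:ZMod p),(1:ZMod p))).1 = (i : ZMod p)
    simp [zsmul_eq_mul]
  · show (i • ((1:ZMod p),(0:ZMod p)) + j • ((0:ZMod p),(1:ZMod p))).2 = (j : ZMod p)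
    simp [zsmul_eq_mul]

theorem apow_mem_lam2 : (FreeGroup.of 0 : Fr)^p ∈ (lam p 2 : Subgroup Fr) := by
  have := pow_p_pow_mem p (FreeGroup.of 0 : Fr) 1
  rwa [pow_one] at this

theorem bpow_mem_lam2 : (FreeGroup.of 1 : Fr)^p ∈ (lam p 2 : Subgroup Fr) := by
  have := pow_p_pow_mem p (FreeGroup.of 1 : Fr) 1
  rwa [pow_one] at this

theorem zpow_p_dvd_eq_one {Q : Type*} [Group Q] {g : Q} (hg : g ^ p = 1) {i : ℤ}
    (h : (p : ℤ) ∣ i) : g ^ i = 1 := by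
  obtain ⟨m, rfl⟩ := h
  rw [zpow_mul, zpow_natCast, hg, one_zpow]

theorem ker_psi (hn : 3 ≤ n) (z : Fr) (h : psi p n hn z = 1) : z ∈ (lam p 2 : Subgroup Fr) := by
  obtain ⟨i, j, hz⟩ := V_form p ((z : Fr ⧸ (lam p 2 : Subgroup Fr)))
  have hz' : ((z : Fr) : Fr ⧸ (lam p 2 : Subgroup Fr)) =
      (((FreeGroup.of 0)^i * (FreeGroup.of 1)^j : Fr) : Fr ⧸ (lam p 2 : Subgroup Fr)) := by
    rw [hz]; rfl
  have hu : z⁻¹ * ((FreeGroup.of 0)^i * (FreeGroup.of 1)^j) ∈ (lam p 2 : Subgroup Fr) :=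
    QuotientGroup.eq.mp hz'
  have hpsiu : psi p n hn (z⁻¹ * ((FreeGroup.of 0)^i * (FreeGroup.of 1)^j)) = 1 :=
    psi_lam2 p n hn _ hu
  rw [map_mul, map_inv, h, inv_one, one_mul, psi_pow_ab p n hn] at hpsiu
  rw [ofAdd_eq_one, Prod.mk_eq_zero] at hpsiu
  obtain ⟨hi, hj⟩ := hpsiu
  rw [ZMod.intCast_zmod_eq_zero_iff_dvd] at hi hj
  -- now conclude z ∈ lam p 2
  rw [← QuotientGroup.eq_one_iff, hz']
  have hA : ((FreeGroup.of 0 : Fr) : Fr ⧸ (lam p 2 : Subgroup Fr))^(p:ℕ) = 1 := by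
    have h1 : ((FreeGroup.of 0 : Fr) : Fr ⧸ (lam p 2 : Subgroup Fr))^(p:ℕ)
        = (((FreeGroup.of 0)^p : Fr) : Fr ⧸ (lam p 2 : Subgroup Fr)) := by simp
    rw [h1, QuotientGroup.eq_one_iff]
    exact apow_mem_lam2 p
  have hB : ((FreeGroup.of 1 : Fr) : Fr ⧸ (lam p 2 : Subgroup Fr))^(p:ℕ) = 1 := by
    have h1 : ((FreeGroup.of 1 : Fr) : Fr ⧸ (lam p 2 : Subgroup Fr))^(p:ℕ)
        = (((FreeGroup.of 1)^p : Fr) : Fr ⧸ (lam p 2 : Subgroup Fr)) := by simp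
    rw [h1, QuotientGroup.eq_one_iff]
    exact bpow_mem_lam2 p
  have hsplit : (((FreeGroup.of 0)^i * (FreeGroup.of 1)^j : Fr) : Fr ⧸ (lam p 2 : Subgroup Fr))
      = ((FreeGroup.of 0 : Fr) : Fr ⧸ (lam p 2 : Subgroup Fr))^i *
        ((FreeGroup.of 1 : Fr) : Fr ⧸ (lam p 2 : Subgroup Fr))^j := rfl
  rw [hsplit, zpow_p_dvd_eq_one p hA hi, zpow_p_dvd_eq_one p hB hj, one_mul]


theorem psi_surj (hn : 3 ≤ n) : Function.Surjective (psi p n hn) := by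
  intro w
  refine ⟨(FreeGroup.of 0)^((Multiplicative.toAdd w).1.val : ℤ) *
    (FreeGroup.of 1)^((Multiplicative.toAdd w).2.val : ℤ), ?_⟩
  rw [psi_pow_ab p n hn]
  apply Multiplicative.toAdd.injective
  show (((((Multiplicative.toAdd w).1.val : ℤ) : ZMod p), ((((Multiplicative.toAdd w).2.val : ℤ)) : ZMod p)) : ZMod p × ZMod p) = Multiplicative.toAdd w
  push_cast
  rw [ZMod.natCast_val, ZMod.natCast_val, ZMod.cast_id, ZMod.cast_id]

theorem key_pow (hn : 3 ≤ n) (f : Fr) (h : f ^ (p^(n-2)) ∈ (lam p n : Subgroup Fr)) :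
    psi p n hn f = 1 := by
  have h1 : (phi p n f) ^ (p^(n-2)) = 1 := by
    rw [← map_pow]
    exact phi_lam p n hn _ h
  rw [← toAdd_eq_zero, toAdd_pow] at h1
  have hc1 : (p^(n-2)) • (Multiplicative.toAdd (phi p n f)).1 = 0 := congrArg Prod.fst h1
  have hc2 : (p^(n-2)) • (Multiplicative.toAdd (phi p n f)).2 = 0 := congrArg Prod.snd h1
  show rmap p n hn (phi p n f) = 1
  rw [← toAdd_eq_zero, toAdd_rmap]
  rw [Prod.mk_eq_zero]
  exact ⟨pcast p n hn _ hc1, pcast p n hn _ hc2⟩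

end MainLemmas

section GSide
variable (p n : ℕ) [hp : Fact p.Prime]

abbrev Gq (p n : ℕ) := Fr ⧸ (lam p n : Subgroup Fr)

theorem lamn_le_ker_psi (hn : 3 ≤ n) : (lam p n : Subgroup Fr) ≤ (psi p n hn).ker := by
  intro x hx
  have hx2 : x ∈ (lam p 2 : Subgroup Fr) := lam_le_of_le p (by omega) hx
  exact psi_lam2 p n hn x hx2

def rho (hn : 3 ≤ n) : Gq p n →* Bp p :=
  QuotientGroup.lift (lam p n) (psi p n hn) (lamn_le_ker_psi p n hn)

theorem rho_mk (hn : 3 ≤ n) (z : Fr) : rho p n hn ((z : Fr) : Gq p n) = psi p n hn z := rfl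

theorem rho_surj (hn : 3 ≤ n) : Function.Surjective (rho p n hn) := by
  intro w
  obtain ⟨z, hz⟩ := psi_surj p n hn w
  exact ⟨((z : Fr) : Gq p n), hz⟩

theorem lamG_bot : (lam p n : Subgroup (Gq p n)) = ⊥ := by
  have h1 : Subgroup.map (QuotientGroup.mk' (lam p n : Subgroup Fr)) (lam p n) = lam p n :=
    lam_map_surj p (QuotientGroup.mk'_surjective _) n
  rw [← h1, eq_bot_iff]
  rintro x ⟨y, hy, rfl⟩
  rw [Subgroup.mem_bot]
  exact (QuotientGroup.eq_one_iff y).mpr hy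

theorem G_exp (x : Gq p n) (hn : 3 ≤ n) : x^(p^(n-1)) = 1 := by
  have h := pow_p_pow_mem p x (n-1)
  have h2 : n - 1 + 1 = n := by omega
  rw [h2, lamG_bot p n] at h
  simpa using h

/-- The image of `lam p 2` in `G`. -/
def NG (p n : ℕ) : Subgroup (Gq p n) :=
  Subgroup.map (QuotientGroup.mk' (lam p n : Subgroup Fr)) (lam p 2)

theorem lamG2_eq : (lam p 2 : Subgroup (Gq p n)) = NG p n :=
  (lam_map_surj p (QuotientGroup.mk'_surjective _) 2).symm

theorem mem_NG_iff (hn : 3 ≤ n) (z : Fr) : ((z : Fr) : Gq p n) ∈ NG p n ↔ z ∈ (lam p 2 : Subgroup Fr) := by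
  constructor
  · rintro ⟨y, hy, hyz⟩
    have : y⁻¹ * z ∈ (lam p n : Subgroup Fr) := QuotientGroup.eq.mp hyz
    have h2 : y⁻¹ * z ∈ (lam p 2 : Subgroup Fr) := lam_le_of_le p (by omega) this
    have : y * (y⁻¹ * z) ∈ (lam p 2 : Subgroup Fr) := mul_mem hy h2
    simpa using this
  · intro hz
    exact ⟨z, hz, rfl⟩

theorem ker_rho (hn : 3 ≤ n) (x : Gq p n) : rho p n hn x = 1 ↔ x ∈ NG p n := by
  obtain ⟨z, rfl⟩ := QuotientGroup.mk_surjective x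
  rw [rho_mk, mem_NG_iff p n hn]
  constructor
  · exact ker_psi p n hn z
  · exact psi_lam2 p n hn z

theorem ker_rho_eq (hn : 3 ≤ n) : (rho p n hn).ker = NG p n := by
  ext x; exact ker_rho p n hn x

theorem coatom_normal (hn : 3 ≤ n) (M : Subgroup (Gq p n)) (hM : IsCoatom M) : M.Normal := by
  haveI : Group.IsNilpotent (Gq p n) := isNilpotent_of_lam_bot p (by omega) (lamG_bot p n)
  exact Subgroup.NormalizerCondition.normal_of_coatom M normalizerCondition_of_isNilpotent hM

theorem coatom_NG_le (hn : 3 ≤ n) (M : Subgroup (Gq p n)) (hM : IsCoatom M) : NG p n ≤ M := by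
  haveI hnorm : M.Normal := coatom_normal p n hn M hM
  set mkM := QuotientGroup.mk' M
  -- every nontrivial element of the quotient generates it
  have hgen : ∀ x : Gq p n ⧸ M, x ≠ 1 → Subgroup.zpowers x = ⊤ := by
    intro x hx
    obtain ⟨g, rfl⟩ := QuotientGroup.mk_surjective x
    have hle : M ≤ Subgroup.comap mkM (Subgroup.zpowers ((g : Gq p n ⧸ M))) := by
      intro m hm
      have : mkM m = 1 := (QuotientGroup.eq_one_iff m).mpr hm
      rw [Subgroup.mem_comap, this]
      exact one_mem _
    have hne : M ≠ Subgroup.comap mkM (Subgroup.zpowers ((g : Gq p n ⧸ M))) := by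
      intro h
      apply hx
      have hgmem : g ∈ Subgroup.comap mkM (Subgroup.zpowers ((g : Gq p n ⧸ M))) := by
        rw [Subgroup.mem_comap]
        exact Subgroup.mem_zpowers _
      rw [← h] at hgmem
      exact (QuotientGroup.eq_one_iff g).mpr hgmem
    have htop : Subgroup.comap mkM (Subgroup.zpowers ((g : Gq p n ⧸ M))) = ⊤ :=
      hM.2 _ (lt_of_le_of_ne hle hne)
    have := congrArg (Subgroup.map mkM) htop
    rwa [Subgroup.map_comap_eq_self_of_surjective (QuotientGroup.mk'_surjective M),
      Subgroup.map_top_of_surjective _ (QuotientGroup.mk'_surjective M)] at this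
  -- exponent p
  have hexp : ∀ x : Gq p n ⧸ M, x ^ p = 1 := by
    intro x
    obtain ⟨g, rfl⟩ := QuotientGroup.mk_surjective x
    have he : ((g : Gq p n ⧸ M)) ^ (p^(n-1)) = 1 := by
      have h1 : ((g : Gq p n ⧸ M)) ^ (p^(n-1)) = ((g ^ (p^(n-1)) : Gq p n) : Gq p n ⧸ M) := by simp
      rw [h1, G_exp p n g hn]
      rfl
    by_cases hx1 : ((g : Gq p n ⧸ M)) = 1
    · rw [hx1, one_pow]
    by_cases hxp : ((g : Gq p n ⧸ M)) ^ p = 1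
    · exact hxp
    exfalso
    set x := ((g : Gq p n ⧸ M)) with hxdef
    have h1 : x ∈ Subgroup.zpowers (x ^ p) := (hgen _ hxp) ▸ Subgroup.mem_top x
    obtain ⟨m, hm⟩ := h1
    have hdvd1 : (orderOf x : ℤ) ∣ (p : ℤ) * m - 1 := by
      rw [orderOf_dvd_iff_zpow_eq_one]
      have h3 : (x ^ p) ^ m = x := hm
      have h2 : x ^ ((p : ℤ) * m) = x := by
        rw [zpow_mul, zpow_natCast]
        exact h3
      rw [zpow_sub, h2, zpow_one, mul_inv_cancel]
    have hdvd2 : orderOf x ∣ p^(n-1) := orderOf_dvd_of_pow_eq_one he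
    obtain ⟨k, hk, hke⟩ := (Nat.dvd_prime_pow hp.out).mp hdvd2
    have hk0 : k ≠ 0 := by
      intro h0
      rw [h0, pow_zero] at hke
      exact hx1 (orderOf_eq_one_iff.mp hke)
    have hpord : (p : ℤ) ∣ (orderOf x : ℤ) := by
      rw [hke]
      exact_mod_cast dvd_pow_self p hk0
    have hdp : (p : ℤ) ∣ (p : ℤ) * m - 1 := hpord.trans hdvd1
    have h1dvd : (p : ℤ) ∣ 1 := (dvd_sub_right (Dvd.intro m rfl)).mp hdp
    have hle1 := Int.le_of_dvd one_pos h1dvd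
    have hp1 := hp.out.one_lt
    omega
  -- commutativity of the quotient
  have hcomm : ∀ x y : Gq p n ⧸ M, Commute x y := by
    intro x y
    by_cases hx1 : x = 1
    · rw [hx1]; exact Commute.one_left y
    have : y ∈ Subgroup.zpowers x := (hgen x hx1) ▸ Subgroup.mem_top y
    obtain ⟨m, rfl⟩ := this
    exact (Commute.refl x).zpow_right m
  -- conclude
  rw [← lamG2_eq]
  show lam p 2 ≤ M
  have : (lam p 2 : Subgroup (Gq p n)) = ⁅(⊤ : Subgroup (Gq p n)), (⊤ : Subgroup (Gq p n))⁆ ⊔ pPow (⊤ : Subgroup (Gq p n)) p := rfl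
  rw [this]
  apply sup_le
  · rw [Subgroup.commutator_le]
    intro g1 _ g2 _
    rw [← QuotientGroup.eq_one_iff (N := M)]
    show (QuotientGroup.mk' M) ⁅g1, g2⁆ = 1
    rw [map_commutatorElement]
    exact commutatorElement_eq_one_iff_commute.mpr (hcomm _ _)
  · refine (Subgroup.closure_le _).2 ?_
    rintro x ⟨h, _, rfl⟩
    rw [SetLike.mem_coe, ← QuotientGroup.eq_one_iff (N := M)]
    show (QuotientGroup.mk' M) (h ^ p) = 1
    rw [map_pow]
    exact hexp _

end GSide

section Corr
variable (p n : ℕ) [hp : Fact p.Prime]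

theorem comap_map_coatom (hn : 3 ≤ n) (M : Subgroup (Gq p n)) (hM : IsCoatom M) :
    Subgroup.comap (rho p n hn) (Subgroup.map (rho p n hn) M) = M := by
  rw [Subgroup.comap_map_eq, ker_rho_eq p n hn, sup_eq_left]
  exact coatom_NG_le p n hn M hM

theorem coatom_map (hn : 3 ≤ n) (M : Subgroup (Gq p n)) (hM : IsCoatom M) :
    IsCoatom (Subgroup.map (rho p n hn) M) := by
  constructor
  · intro h
    apply hM.1
    have := comap_map_coatom p n hn M hM
    rw [h, Subgroup.comap_top] at this
    exact this.symm
  · intro K hK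
    have h1 : M < Subgroup.comap (rho p n hn) K := by
      rcases lt_or_eq_of_le (le_trans (le_of_eq (comap_map_coatom p n hn M hM).symm)
        (Subgroup.comap_mono hK.le)) with h | h
      · exact h
      · exfalso
        have := congrArg (Subgroup.map (rho p n hn)) h
        rw [Subgroup.map_comap_eq_self_of_surjective (rho_surj p n hn)] at this
        exact absurd this (ne_of_lt hK)
    have := hM.2 _ h1
    have h2 := congrArg (Subgroup.map (rho p n hn)) this
    rwa [Subgroup.map_comap_eq_self_of_surjective (rho_surj p n hn),
      Subgroup.map_top_of_surjective _ (rho_surj p n hn)] at h2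

theorem coatom_comap (hn : 3 ≤ n) (H : Subgroup (Bp p)) (hH : IsCoatom H) :
    IsCoatom (Subgroup.comap (rho p n hn) H) := by
  constructor
  · intro h
    apply hH.1
    have := congrArg (Subgroup.map (rho p n hn)) h
    rwa [Subgroup.map_comap_eq_self_of_surjective (rho_surj p n hn),
      Subgroup.map_top_of_surjective _ (rho_surj p n hn)] at this
  · intro K hK
    have hker : (rho p n hn).ker ≤ K := le_trans (Subgroup.ker_le_comap _ _) hK.le
    have h1 : H < Subgroup.map (rho p n hn) K := by
      have hle : H ≤ Subgroup.map (rho p n hn) K := by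
        conv_lhs => rw [← Subgroup.map_comap_eq_self_of_surjective (rho_surj p n hn) H]
        exact Subgroup.map_mono hK.le
      rcases lt_or_eq_of_le hle with h | h
      · exact h
      · exfalso
        have := congrArg (Subgroup.comap (rho p n hn)) h
        rw [Subgroup.comap_map_eq, sup_eq_left.mpr hker] at this
        exact absurd this (ne_of_lt hK)
    have := hH.2 _ h1
    have h2 := congrArg (Subgroup.comap (rho p n hn)) this
    rw [Subgroup.comap_map_eq, sup_eq_left.mpr hker, Subgroup.comap_top] at h2
    exact h2

noncomputable def coatomEquivG (hn : 3 ≤ n) :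
    {M : Subgroup (Gq p n) // IsCoatom M} ≃ {K : AddSubgroup (Xp p) // IsCoatom K} where
  toFun := fun M => ⟨AddSubgroup.toSubgroup.symm (Subgroup.map (rho p n hn) M.1), by
    have h := coatom_map p n hn M.1 M.2
    have h2 : AddSubgroup.toSubgroup (AddSubgroup.toSubgroup.symm (Subgroup.map (rho p n hn) M.1))
        = Subgroup.map (rho p n hn) M.1 := OrderIso.apply_symm_apply _ _
    exact (OrderIso.isCoatom_iff AddSubgroup.toSubgroup _).mp (h2.symm ▸ h)⟩
  invFun := fun K => ⟨Subgroup.comap (rho p n hn) (AddSubgroup.toSubgroup K.1),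
    coatom_comap p n hn _ ((OrderIso.isCoatom_iff AddSubgroup.toSubgroup K.1).mpr K.2)⟩
  left_inv := fun M => by
    ext x
    simp only [OrderIso.apply_symm_apply]
    rw [comap_map_coatom p n hn M.1 M.2]
  right_inv := fun K => by
    ext v
    simp only []
    rw [Subgroup.map_comap_eq_self_of_surjective (rho_surj p n hn), OrderIso.symm_apply_apply]

theorem card_coatoms_G (hn : 3 ≤ n) :
    Nat.card {M : Subgroup (Gq p n) // IsCoatom M} = p + 1 := by
  rw [Nat.card_congr (coatomEquivG p n hn), card_coatoms]

end Corr

section BFacts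
variable (p : ℕ) [hp : Fact p.Prime]

theorem coatomB_exists {H : Subgroup (Bp p)} (hH : IsCoatom H) : ∃ y ∈ H, y ≠ 1 := by
  have hK : IsCoatom (AddSubgroup.toSubgroup.symm H) := by
    refine (OrderIso.isCoatom_iff AddSubgroup.toSubgroup _).mp ?_
    rwa [OrderIso.apply_symm_apply]
  obtain ⟨v, hv, hv0⟩ := coatom_exists_ne_zero p hK
  refine ⟨Multiplicative.ofAdd v, ?_, ?_⟩
  · have : Multiplicative.ofAdd v ∈ AddSubgroup.toSubgroup (AddSubgroup.toSubgroup.symm H) := hv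
    rwa [OrderIso.apply_symm_apply] at this
  · intro h
    exact hv0 (ofAdd_eq_one.mp h)

theorem coatomB_le_zpowers {H : Subgroup (Bp p)} (hH : IsCoatom H) {y : Bp p}
    (hy : y ∈ H) (hy1 : y ≠ 1) : H ≤ Subgroup.zpowers y := by
  have hK : IsCoatom (AddSubgroup.toSubgroup.symm H) := by
    refine (OrderIso.isCoatom_iff AddSubgroup.toSubgroup _).mp ?_
    rwa [OrderIso.apply_symm_apply]
  have hyK : Multiplicative.toAdd y ∈ AddSubgroup.toSubgroup.symm H := by
    show Multiplicative.ofAdd (Multiplicative.toAdd y) ∈ AddSubgroup.toSubgroup (AddSubgroup.toSubgroup.symm H)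
    rwa [OrderIso.apply_symm_apply]
  have hy0 : Multiplicative.toAdd y ≠ 0 := fun h => hy1 (toAdd_eq_zero.mp h)
  have heq := coatom_eq_zmultiples p hK hyK hy0
  intro z hz
  have hzK : Multiplicative.toAdd z ∈ AddSubgroup.toSubgroup.symm H := by
    show Multiplicative.ofAdd (Multiplicative.toAdd z) ∈ AddSubgroup.toSubgroup (AddSubgroup.toSubgroup.symm H)
    rwa [OrderIso.apply_symm_apply]
  rw [heq] at hzK
  obtain ⟨k, hk⟩ := hzK
  refine ⟨k, ?_⟩
  apply Multiplicative.toAdd.injective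
  rw [toAdd_zpow]
  exact hk

end BFacts

section Struct
variable (p n : ℕ) [hp : Fact p.Prime]

theorem coatom_struct (hn : 3 ≤ n) (M : Subgroup (Gq p n)) (hM : IsCoatom M) :
    ∃ x ∈ M, rho p n hn x ≠ 1 ∧
      Subgroup.map (rho p n hn) M = Subgroup.zpowers (rho p n hn x) ∧
      pPow M (p^(n-2)) = Subgroup.zpowers (x^(p^(n-2))) := by
  obtain ⟨y, hyH, hy1⟩ := coatomB_exists p (coatom_map p n hn M hM)
  obtain ⟨x, hxM, rfl⟩ := hyH
  refine ⟨x, hxM, hy1, ?_, ?_⟩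
  · exact le_antisymm (coatomB_le_zpowers p (coatom_map p n hn M hM) ⟨x, hxM, rfl⟩ hy1)
      (Subgroup.zpowers_le.mpr ⟨x, hxM, rfl⟩)
  · have hmapM : Subgroup.map (rho p n hn) M = Subgroup.zpowers (rho p n hn x) :=
      le_antisymm (coatomB_le_zpowers p (coatom_map p n hn M hM) ⟨x, hxM, rfl⟩ hy1)
        (Subgroup.zpowers_le.mpr ⟨x, hxM, rfl⟩)
    refine le_antisymm ?_ (Subgroup.zpowers_le.mpr (mem_pPow_of_mem hxM _))
    refine (Subgroup.closure_le _).2 ?_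
    rintro w ⟨m, hm, rfl⟩
    have hrm : rho p n hn m ∈ Subgroup.zpowers (rho p n hn x) := by
      rw [← hmapM]
      exact ⟨m, hm, rfl⟩
    obtain ⟨k, hk⟩ := hrm
    set u := (x^k)⁻¹ * m with hu
    have hk' : (rho p n hn x)^k = rho p n hn m := hk
    have hru : rho p n hn u = 1 := by
      rw [hu, map_mul, map_inv, map_zpow, hk']
      group
    have humem : u ∈ (lam p 2 : Subgroup (Gq p n)) := by
      rw [lamG2_eq]
      exact (ker_rho p n hn u).mp hru
    obtain ⟨w, hw, hww⟩ := lam_pow_iter p (n-2) 2 (x^k) u humem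
    have h2n : 2 + (n-2) = n := by omega
    rw [h2n, lamG_bot p n, Subgroup.mem_bot] at hw
    have hmx : m = x^k * u := by rw [hu]; group
    have heq : m ^ (p^(n-2)) = (x^k) ^ (p^(n-2)) := by
      rw [hmx, hww, hw, mul_one]
    rw [SetLike.mem_coe, heq]
    refine ⟨k, ?_⟩
    show (x^(p^(n-2)) : Gq p n)^k = (x^k)^(p^(n-2))
    rw [← zpow_natCast x (p^(n-2)), ← zpow_natCast (x^k) (p^(n-2)), ← zpow_mul, ← zpow_mul,
      mul_comm]

theorem order_elem (hn : 3 ≤ n) (x : Gq p n) (hx : rho p n hn x ≠ 1) :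
    x ^ (p^(n-2)) ≠ 1 ∧ orderOf x = p^(n-1) := by
  obtain ⟨f, rfl⟩ := QuotientGroup.mk_surjective x
  have hne : ((f : Fr) : Gq p n) ^ (p^(n-2)) ≠ 1 := by
    intro h
    have h1 : ((f : Fr) : Gq p n) ^ (p^(n-2)) = ((f ^ (p^(n-2)) : Fr) : Gq p n) := by simp
    rw [h1, QuotientGroup.eq_one_iff] at h
    exact hx (key_pow p n hn f h)
  refine ⟨hne, ?_⟩
  have hfin : ((f : Fr) : Gq p n) ^ (p ^ ((n-2) + 1)) = 1 := by
    have : (n-2) + 1 = n - 1 := by omega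
    rw [this]
    exact G_exp p n _ hn
  have := orderOf_eq_prime_pow hne hfin
  rw [this]
  congr 1
  omega

theorem rho_ne_one_of_not_frattini (hn : 3 ≤ n) (x : Gq p n) (hx : x ∉ frattini (Gq p n)) :
    rho p n hn x ≠ 1 := by
  intro h
  apply hx
  have hNle : NG p n ≤ frattini (Gq p n) := by
    have : frattini (Gq p n) = ⨅ M ∈ {H : Subgroup (Gq p n) | IsCoatom H}, M := rfl
    rw [this]
    exact le_iInf₂ fun M hM => coatom_NG_le p n hn M hM
  exact hNle ((ker_rho p n hn x).mp h)

end Struct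

section Distinct
variable (p n : ℕ) [hp : Fact p.Prime]

theorem psi_of_phi_pow (hn : 3 ≤ n) (z : Fr)
    (h : (p^(n-2)) • (Multiplicative.toAdd (phi p n z)) = 0) : psi p n hn z = 1 := by
  have hc1 : (p^(n-2)) • (Multiplicative.toAdd (phi p n z)).1 = 0 := congrArg Prod.fst h
  have hc2 : (p^(n-2)) • (Multiplicative.toAdd (phi p n z)).2 = 0 := congrArg Prod.snd h
  show rmap p n hn (phi p n z) = 1
  rw [← toAdd_eq_zero, toAdd_rmap, Prod.mk_eq_zero]
  exact ⟨pcast p n hn _ hc1, pcast p n hn _ hc2⟩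

theorem coatom_pPow_inj (hn : 3 ≤ n) (M M' : Subgroup (Gq p n)) (hM : IsCoatom M)
    (hM' : IsCoatom M') (h : pPow M (p^(n-2)) = pPow M' (p^(n-2))) : M = M' := by
  obtain ⟨x, hxM, hx1, hmapM, hpowM⟩ := coatom_struct p n hn M hM
  obtain ⟨x', hxM', hx1', hmapM', hpowM'⟩ := coatom_struct p n hn M' hM'
  -- x'^(p^(n-2)) lies in zpowers (x^(p^(n-2)))
  have hmem : x' ^ (p^(n-2)) ∈ Subgroup.zpowers (x ^ (p^(n-2))) := by
    rw [← hpowM, h, hpowM']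
    exact Subgroup.mem_zpowers _
  obtain ⟨j, hj⟩ := hmem
  have hj' : (x ^ (p^(n-2))) ^ j = x' ^ (p^(n-2)) := hj
  obtain ⟨f, rfl⟩ := QuotientGroup.mk_surjective x
  obtain ⟨f', rfl⟩ := QuotientGroup.mk_surjective x'
  -- pass to the free group
  have hlift : (((f ^ (p^(n-2)) : Fr))^j * ((f' ^ (p^(n-2)) : Fr))⁻¹ : Fr) ∈ (lam p n : Subgroup Fr) := by
    have h1 : ((((f ^ (p^(n-2)) : Fr))^j : Fr) : Gq p n) = ((((f' ^ (p^(n-2)) : Fr)) : Fr) : Gq p n) := by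
      have e1 : ((((f ^ (p^(n-2)) : Fr))^j : Fr) : Gq p n) = (((f : Fr) : Gq p n) ^ (p^(n-2))) ^ j := by
        simp
      have e2 : ((((f' ^ (p^(n-2)) : Fr)) : Fr) : Gq p n) = ((f' : Fr) : Gq p n) ^ (p^(n-2)) := by
        simp
      rw [e1, e2, hj']
    have := QuotientGroup.eq.mp h1.symm
    have h2 : (((f' ^ (p^(n-2)) : Fr)))⁻¹ * (((f ^ (p^(n-2)) : Fr))^j) ∈ (lam p n : Subgroup Fr) := this
    have h3 := (lam_normal p n).conj_mem _ h2 (((f ^ (p^(n-2)) : Fr))^j)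
    have he : ((f ^ (p^(n-2)) : Fr))^j * ((((f' ^ (p^(n-2)) : Fr)))⁻¹ * (((f ^ (p^(n-2)) : Fr))^j)) * (((f ^ (p^(n-2)) : Fr))^j)⁻¹
        = ((f ^ (p^(n-2)) : Fr))^j * ((f' ^ (p^(n-2)) : Fr))⁻¹ := by group
    rwa [he] at h3
  -- apply phi
  have hphi : phi p n ((((f ^ (p^(n-2)) : Fr))^j * ((f' ^ (p^(n-2)) : Fr))⁻¹ : Fr)) = 1 :=
    phi_lam p n hn _ hlift
  -- translate to psi (f' * f^(-j)) = 1
  have hz : psi p n hn (f' * f ^ (-j)) = 1 := by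
    apply psi_of_phi_pow p n hn
    have expand : phi p n (f' * f ^ (-j)) = phi p n f' * (phi p n f) ^ (-j) := by
      rw [map_mul, map_zpow]
    rw [map_mul, map_inv, map_zpow, map_pow, map_pow] at hphi
    have hEq : ((phi p n f) ^ (p^(n-2)))^j = (phi p n f') ^ (p^(n-2)) :=
      mul_inv_eq_one.mp hphi
    have h3 : (p^(n-2)) • Multiplicative.toAdd (phi p n f')
        = j • ((p^(n-2)) • Multiplicative.toAdd (phi p n f)) := by
      rw [← toAdd_pow, ← hEq, toAdd_zpow, toAdd_pow]
    rw [expand, toAdd_mul, toAdd_zpow, smul_add, h3, smul_comm (p^(n-2)) (-j), neg_smul,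
      add_neg_cancel]
  -- conclude membership
  have hzlam : f' * f ^ (-j) ∈ (lam p 2 : Subgroup Fr) := ker_psi p n hn _ hz
  have hzNG : ((f' * f ^ (-j) : Fr) : Gq p n) ∈ NG p n := (mem_NG_iff p n hn _).mpr hzlam
  have hzM : ((f' * f ^ (-j) : Fr) : Gq p n) ∈ M := coatom_NG_le p n hn M hM hzNG
  have hx'M : ((f' : Fr) : Gq p n) ∈ M := by
    have hsplit : ((f' * f ^ (-j) : Fr) : Gq p n)
        = ((f' : Fr) : Gq p n) * ((f : Fr) : Gq p n) ^ (-j) := by simp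
    rw [hsplit] at hzM
    have := mul_mem hzM (zpow_mem hxM j)
    rwa [mul_assoc, ← zpow_add, neg_add_cancel, zpow_zero, mul_one] at this
  -- maps agree
  have hle : Subgroup.map (rho p n hn) M' ≤ Subgroup.map (rho p n hn) M := by
    rw [hmapM']
    exact Subgroup.zpowers_le.mpr ⟨_, hx'M, rfl⟩
  have hmapeq : Subgroup.map (rho p n hn) M' = Subgroup.map (rho p n hn) M := by
    rcases lt_or_eq_of_le hle with hlt | heq
    · exact absurd ((coatom_map p n hn M' hM').2 _ hlt) (coatom_map p n hn M hM).1
    · exact heq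
  have := congrArg (Subgroup.comap (rho p n hn)) hmapeq
  rw [comap_map_coatom p n hn M hM, comap_map_coatom p n hn M' hM'] at this
  exact this.symm

end Distinct


/-- For `G = F/λ_n(F)` (`F` free of rank 2, `n ≥ 3`): `G` has exactly `p+1` maximal subgroups;
the power subgroups `M^(p^(n-2))`, as `M` ranges over the maximal subgroups, are pairwise
distinct subgroups of order `p` contained in `λ_{n-1}(F)/λ_n(F)`; and every element of a maximal
subgroup `M` outside the Frattini subgroup `Φ(G)` has order `p^(n-1)`. -/
theorem statement_5 (p n : ℕ) (hp : p.Prime) (hn : 3 ≤ n) :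
    let F := FreeGroup (Fin 2)
    let G := F ⧸ lam p n
    Nat.card {M : Subgroup G // IsCoatom M} = p + 1 ∧
    (∀ M : Subgroup G, IsCoatom M →
        pPow M (p ^ (n - 2)) ≤ Subgroup.map (QuotientGroup.mk' (lam p n)) (lam p (n - 1)) ∧
        Nat.card (pPow M (p ^ (n - 2))) = p) ∧
    (∀ M M' : Subgroup G, IsCoatom M → IsCoatom M' →
        pPow M (p ^ (n - 2)) = pPow M' (p ^ (n - 2)) → M = M') ∧
    (∀ M : Subgroup G, IsCoatom M → ∀ x ∈ M, x ∉ frattini G → orderOf x = p ^ (n - 1)) := by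
  intro F G
  haveI : Fact p.Prime := ⟨hp⟩
  refine ⟨card_coatoms_G p n hn, ?_, coatom_pPow_inj p n hn, ?_⟩
  · intro M hM
    constructor
    · refine (Subgroup.closure_le _).2 ?_
      rintro w ⟨h, hhM, rfl⟩
      obtain ⟨f, rfl⟩ := QuotientGroup.mk_surjective h
      have h1 : ((f : Fr) : Gq p n) ^ (p^(n-2)) = ((f ^ (p^(n-2)) : Fr) : Gq p n) := by simp
      rw [SetLike.mem_coe, h1]
      refine ⟨f ^ (p^(n-2)), ?_, rfl⟩
      have hmem := pow_p_pow_mem p f (n-2)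
      have h2 : (n-2)+1 = n-1 := by omega
      rwa [h2] at hmem
    · obtain ⟨x, hxM, hx1, _, hpow⟩ := coatom_struct p n hn M hM
      rw [hpow, Nat.card_zpowers]
      have hne := (order_elem p n hn x hx1).1
      have hp1 : (x ^ (p^(n-2)))^p = 1 := by
        rw [← pow_mul, ← pow_succ]
        have h2 : (n-2)+1 = n-1 := by omega
        rw [h2]
        exact G_exp p n x hn
      exact orderOf_eq_prime hp1 hne
  · intro M hM x hxM hxf
    have hx1 := rho_ne_one_of_not_frattini p n hn x hxf
    exact (order_elem p n hn x hx1).2
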